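/- Let (A, μ, λ, η) be a unital coFrobenius bialgebra: μ is graded-associative with unit η, and with copairing c = (-1)^{|λ||μ|+|μ|} λη the relations λ = (1⊗μ)(c⊗1) = (-1)^{|μ|}(μ⊗1)(1⊗c) hold together with symmetry τc = (-1)^{|λ|} c. Then λ is graded-coassociative: (λ⊗1)λ = (-1)^{|λ|}(1⊗λ)λ. -/

import Mathlib

open TensorProduct LinearMap
open scoped TensorProduct DirectSum

namespace GradedCoFrob

variable {R : Type} [CommRing R] {M : Type} [AddCommGroup M] [Module R M]

/-- The Koszul sign `(-1)^n` for `n : ℤ`. -/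
def ksign (n : ℤ) : ℤ := (((-1 : ℤˣ) ^ n : ℤˣ) : ℤ)

variable (𝒜 : ℤ → Submodule R M) [DirectSum.Decomposition 𝒜]

/-- Build a linear map `M →ₗ N` out of its values on the homogeneous pieces,
bundled linearly in the family of values. -/
noncomputable def fromPiecesHom {N : Type} [AddCommGroup N] [Module R N] :
    (∀ i : ℤ, 𝒜 i →ₗ[R] N) →ₗ[R] (M →ₗ[R] N) :=
  (LinearMap.lcomp R N (DirectSum.decomposeLinearEquiv 𝒜).toLinearMap).comp
    (DFinsupp.lsum R (M := fun i => 𝒜 i) (N := N)).toLinearMap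

/-- Build a linear map `M →ₗ N` out of its values on the homogeneous pieces. -/
noncomputable def fromPieces {N : Type} [AddCommGroup N] [Module R N]
    (f : ∀ i : ℤ, 𝒜 i →ₗ[R] N) : M →ₗ[R] N :=
  fromPiecesHom 𝒜 f

/-- Build a bilinear map `M →ₗ M →ₗ N` out of its values on pairs of homogeneous pieces. -/
noncomputable def fromPieces₂ {N : Type} [AddCommGroup N] [Module R N]
    (f : ∀ i j : ℤ, 𝒜 i →ₗ[R] 𝒜 j →ₗ[R] N) : M →ₗ[R] M →ₗ[R] N :=
  fromPieces 𝒜 (fun i => (fromPiecesHom 𝒜).comp (LinearMap.pi (fun j => f i j)))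

/-- The operator multiplying the degree `i` component by the Koszul sign `(-1)^(d*i)`. -/
noncomputable def signAction (d : ℤ) : M →ₗ[R] M :=
  fromPieces 𝒜 (fun i => ksign (d * i) • (𝒜 i).subtype)

/-- The Koszul twist `τ(a ⊗ b) = (-1)^{|a||b|} b ⊗ a`. -/
noncomputable def twist : M ⊗[R] M →ₗ[R] M ⊗[R] M :=
  TensorProduct.lift (fromPieces₂ 𝒜 (fun i j =>
    ksign (i * j) • ((((TensorProduct.mk R M M).flip).comp (𝒜 i).subtype).compl₂
      (𝒜 j).subtype)))

/-- Left contraction `(f ⊗ 1)(x ⊗ y) = f(x) • y` (no Koszul sign since `1` has degree `0`). -/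
noncomputable def contrL {N : Type} [AddCommGroup N] [Module R N]
    (f : N →ₗ[R] R) : N ⊗[R] M →ₗ[R] M :=
  TensorProduct.lift ((LinearMap.lsmul R M).comp f)

/-- Right contraction with Koszul sign:
`(1 ⊗ f)(x ⊗ y) = (-1)^{d|x|} f(y) • x` where `d` is the degree of `f`. -/
noncomputable def contrR {N : Type} [AddCommGroup N] [Module R N]
    (f : N →ₗ[R] R) (d : ℤ) : M ⊗[R] N →ₗ[R] M :=
  TensorProduct.lift ((((LinearMap.lsmul R M).comp f).flip).comp (signAction 𝒜 d))

/-- Koszul-signed evaluation of a pair of functionals on a tensor: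
`(x ⊗ y) ↦ f((-1)^{d₁|x|} x) * g((-1)^{d₂|y|} y)`. -/
noncomputable def ev2 (f g : M →ₗ[R] R) (d₁ d₂ : ℤ) : M ⊗[R] M →ₗ[R] R :=
  TensorProduct.lift (((LinearMap.mul R R).comp (f.comp (signAction 𝒜 d₁))).compl₂
    (g.comp (signAction 𝒜 d₂)))

/-- The map `c⃗ : A^∨ → A`, `f ↦ (-1)^{|f||c|}(f ⊗ 1)c`, implemented by putting the sign
`(-1)^{dc |x|}` on the first tensor factor of the copairing `c` (of degree `dc`). -/
noncomputable def cvec (c : M ⊗[R] M) (dc : ℤ) : (M →ₗ[R] R) →ₗ[R] M :=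
  (LinearMap.applyₗ ((LinearMap.rTensor M (signAction 𝒜 dc)) c)).comp
    ((TensorProduct.lift.equiv (RingHom.id R) M M M).toLinearMap.comp
      (LinearMap.llcomp R M R (M →ₗ[R] M) (LinearMap.lsmul R M)))

/-- The operation `(1 ⊗ c ⊗ 1) : A ⊗ A → (A ⊗ A) ⊗ (A ⊗ A)`,
`a ⊗ b ↦ (-1)^{|c||a|} (a ⊗ c₁) ⊗ (c₂ ⊗ b)` for a copairing `c` of degree `dc`. -/
noncomputable def midIns (c : M ⊗[R] M) (dc : ℤ) :
    M ⊗[R] M →ₗ[R] (M ⊗[R] M) ⊗[R] (M ⊗[R] M) :=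
  (TensorProduct.assoc R (M ⊗[R] M) M M).toLinearMap.comp
    (LinearMap.rTensor M
      (((TensorProduct.assoc R M M M).symm.toLinearMap).comp
        (((TensorProduct.mk R M (M ⊗[R] M)).flip c).comp (signAction 𝒜 dc))))

/-- The Koszul-signed cyclic permutation `σ(a⊗b⊗c) = (-1)^{(|a|+|b|)|c|} c⊗a⊗b`. -/
noncomputable def cyc : (M ⊗[R] M) ⊗[R] M →ₗ[R] (M ⊗[R] M) ⊗[R] M :=
  (LinearMap.rTensor M (twist 𝒜)).comp
    ((TensorProduct.assoc R M M M).symm.toLinearMap.comp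
      ((LinearMap.lTensor M (twist 𝒜)).comp (TensorProduct.assoc R M M M).toLinearMap))

/-- The submodule `A_i ⊗ A_j ⊆ A ⊗ A`. -/
noncomputable def tpiece (i j : ℤ) : Submodule R (M ⊗[R] M) :=
  LinearMap.range (TensorProduct.map (𝒜 i).subtype (𝒜 j).subtype)

/-- The degree `k` part `⨁_{i+j=k} A_i ⊗ A_j` of `A ⊗ A`. -/
noncomputable def tgrade (k : ℤ) : Submodule R (M ⊗[R] M) :=
  ⨆ i : ℤ, tpiece 𝒜 i (k - i)

/-- A product is homogeneous of degree `d`. -/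
def IsHomogProd (d : ℤ) (mu : M ⊗[R] M →ₗ[R] M) : Prop :=
  ∀ i j : ℤ, ∀ x ∈ 𝒜 i, ∀ y ∈ 𝒜 j, mu (x ⊗ₜ[R] y) ∈ 𝒜 (i + j + d)

/-- A coproduct is homogeneous of degree `d`. -/
def IsHomogCoprod (d : ℤ) (lam : M →ₗ[R] M ⊗[R] M) : Prop :=
  ∀ k : ℤ, ∀ x ∈ 𝒜 k, lam x ∈ tgrade 𝒜 (k + d)

/-- A scalar-valued functional is homogeneous of degree `d`. -/
def IsHomogFun (d : ℤ) (f : M →ₗ[R] R) : Prop :=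
  ∀ i : ℤ, i ≠ -d → ∀ x ∈ 𝒜 i, f x = 0

/-- A pairing is homogeneous of degree `d`. -/
def IsHomogPairing (d : ℤ) (p : M ⊗[R] M →ₗ[R] R) : Prop :=
  ∀ i j : ℤ, i + j ≠ -d → ∀ x ∈ 𝒜 i, ∀ y ∈ 𝒜 j, p (x ⊗ₜ[R] y) = 0

end GradedCoFrob
namespace GradedCoFrob

/-- A unital coFrobenius bialgebra structure on a ℤ-graded module
(Definition `defi:coFrobenius-unital-bialgebra`), with all Koszul sign conventions explicit. -/
structure UnitalCoFrob (R : Type) [CommRing R] {M : Type} [AddCommGroup M] [Module R M]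
    (𝒜 : ℤ → Submodule R M) [DirectSum.Decomposition 𝒜] where
  mu : M ⊗[R] M →ₗ[R] M
  lam : M →ₗ[R] M ⊗[R] M
  unit : M
  dm : ℤ
  dl : ℤ
  mu_homog : IsHomogProd 𝒜 dm mu
  lam_homog : IsHomogCoprod 𝒜 dl lam
  unit_homog : unit ∈ 𝒜 (-dm)
  /-- graded associativity `μ(μ⊗1) = (-1)^{|μ|} μ(1⊗μ)` -/
  mu_assoc : mu.comp (LinearMap.rTensor M mu) =
    ksign dm • (mu.comp ((TensorProduct.map (signAction 𝒜 dm) mu).comp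
      (TensorProduct.assoc R M M M).toLinearMap))
  /-- `(-1)^{|μ|} μ(η ⊗ 1) = 1` -/
  unit_left : ksign dm • (mu.comp ((TensorProduct.mk R M M) unit)) = LinearMap.id
  /-- `μ(1 ⊗ η) = 1` -/
  unit_right : mu.comp (((TensorProduct.mk R M M).flip unit).comp (signAction 𝒜 (-dm))) =
    LinearMap.id
  cop : M ⊗[R] M
  /-- the copairing `c = (-1)^{|λ||μ|+|μ|} λη` -/
  cop_def : cop = ksign (dl * dm + dm) • lam unit
  /-- `λ = (1⊗μ)(c⊗1)` -/
  cofrob_left : lam = (TensorProduct.map (signAction 𝒜 dm) mu).comp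
    ((TensorProduct.assoc R M M M).toLinearMap.comp (TensorProduct.mk R (M ⊗[R] M) M cop))
  /-- `λ = (-1)^{|μ|}(μ⊗1)(1⊗c)` -/
  cofrob_right : lam = ksign dm • ((LinearMap.rTensor M mu).comp
    ((TensorProduct.assoc R M M M).symm.toLinearMap.comp
      (((TensorProduct.mk R M (M ⊗[R] M)).flip cop).comp (signAction 𝒜 (dl - dm)))))
  /-- `τc = (-1)^{|λ|} c` -/
  cop_symm : twist 𝒜 cop = ksign dl • cop

/-- A biunital coFrobenius bialgebra structure on a ℤ-graded module
(Definition `defi:biunital-coFrobenius-bialgebra`), with all Koszul sign conventions explicit. -/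
structure BiunitalCoFrob (R : Type) [CommRing R] {M : Type} [AddCommGroup M] [Module R M]
    (𝒜 : ℤ → Submodule R M) [DirectSum.Decomposition 𝒜] where
  mu : M ⊗[R] M →ₗ[R] M
  lam : M →ₗ[R] M ⊗[R] M
  unit : M
  counit : M →ₗ[R] R
  dm : ℤ
  dl : ℤ
  mu_homog : IsHomogProd 𝒜 dm mu
  lam_homog : IsHomogCoprod 𝒜 dl lam
  unit_homog : unit ∈ 𝒜 (-dm)
  counit_homog : IsHomogFun 𝒜 (-dl) counit
  mu_assoc : mu.comp (LinearMap.rTensor M mu) =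
    ksign dm • (mu.comp ((TensorProduct.map (signAction 𝒜 dm) mu).comp
      (TensorProduct.assoc R M M M).toLinearMap))
  /-- graded coassociativity `(λ⊗1)λ = (-1)^{|λ|}(1⊗λ)λ` -/
  lam_coassoc : (LinearMap.rTensor M lam).comp lam =
    ksign dl • ((TensorProduct.assoc R M M M).symm.toLinearMap.comp
      ((TensorProduct.map (signAction 𝒜 dl) lam).comp lam))
  unit_left : ksign dm • (mu.comp ((TensorProduct.mk R M M) unit)) = LinearMap.id
  unit_right : mu.comp (((TensorProduct.mk R M M).flip unit).comp (signAction 𝒜 (-dm))) =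
    LinearMap.id
  /-- `(ε⊗1)λ = 1` -/
  counit_left : (contrL counit).comp lam = LinearMap.id
  /-- `(-1)^{|λ|}(1⊗ε)λ = 1` -/
  counit_right : ksign dl • ((contrR 𝒜 counit (-dl)).comp lam) = LinearMap.id
  cop : M ⊗[R] M
  cop_def : cop = ksign (dl * dm + dm) • lam unit
  pr : M ⊗[R] M →ₗ[R] R
  /-- the pairing `p = (-1)^{|λ|} εμ` -/
  pr_def : pr = ksign dl • (counit.comp mu)
  cofrob_left : lam = (TensorProduct.map (signAction 𝒜 dm) mu).comp
    ((TensorProduct.assoc R M M M).toLinearMap.comp (TensorProduct.mk R (M ⊗[R] M) M cop))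
  cofrob_right : lam = ksign dm • ((LinearMap.rTensor M mu).comp
    ((TensorProduct.assoc R M M M).symm.toLinearMap.comp
      (((TensorProduct.mk R M (M ⊗[R] M)).flip cop).comp (signAction 𝒜 (dl - dm)))))
  /-- `μ = (-1)^{|μ||λ|+|λ|}(p⊗1)(1⊗λ)` -/
  cofrob_pr_left : mu = ksign (dm * dl + dl) • ((contrL pr).comp
    ((TensorProduct.assoc R M M M).symm.toLinearMap.comp
      (TensorProduct.map (signAction 𝒜 dl) lam)))
  /-- `μ = (-1)^{|μ||λ|}(1⊗p)(λ⊗1)` -/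
  cofrob_pr_right : mu = ksign (dm * dl) • ((contrR 𝒜 pr (dm - dl)).comp
    ((TensorProduct.assoc R M M M).toLinearMap.comp (LinearMap.rTensor M lam)))
  cop_symm : twist 𝒜 cop = ksign dl • cop
  /-- `pτ = (-1)^{|μ|} p` -/
  pr_symm : pr.comp (twist 𝒜) = ksign dm • pr

end GradedCoFrob

namespace GradedCoFrob


section Aux
variable {R : Type} [CommRing R] {M : Type} [AddCommGroup M] [Module R M]
variable (𝒜 : ℤ → Submodule R M) [DirectSum.Decomposition 𝒜]

lemma ksign_add (m n : ℤ) : ksign (m + n) = ksign m * ksign n := by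
  unfold ksign; rw [zpow_add]; norm_cast

lemma ksign_even {n : ℤ} (h : Even n) : ksign n = 1 := by
  obtain ⟨k, rfl⟩ := h
  unfold ksign
  rw [← two_mul, zpow_mul]
  have h2 : ((-1 : ℤˣ) ^ (2:ℤ)) = 1 := by decide
  rw [h2, one_zpow]
  rfl

lemma ksign_congr {m n : ℤ} (h : Even (m - n)) : ksign m = ksign n := by
  have hm : m = n + (m - n) := by ring
  rw [hm, ksign_add, ksign_even h, mul_one]

lemma fromPieces_of_mem {N : Type} [AddCommGroup N] [Module R N] (f : ∀ i : ℤ, 𝒜 i →ₗ[R] N)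
    {i : ℤ} {x : M} (hx : x ∈ 𝒜 i) : fromPieces 𝒜 f x = f i ⟨x, hx⟩ := by
  unfold fromPieces fromPiecesHom
  simp only [coe_comp, LinearEquiv.coe_coe, Function.comp_apply, lcomp_apply,
    DirectSum.decomposeLinearEquiv_apply, DirectSum.decompose_of_mem 𝒜 hx, DirectSum.of,
    DFinsupp.singleAddHom_apply]
  erw [DFinsupp.lsum_single]

lemma signAction_of_mem {d i : ℤ} {x : M} (hx : x ∈ 𝒜 i) :
    signAction 𝒜 d x = ksign (d * i) • x := by
  rw [signAction, fromPieces_of_mem 𝒜 _ hx]; rfl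

lemma tgrade_induction {d : ℤ} {c : M ⊗[R] M} (hc : c ∈ tgrade 𝒜 d)
    {P : M ⊗[R] M → Prop} (h0 : P 0)
    (hadd : ∀ u v, P u → P v → P (u + v))
    (htmul : ∀ (i j : ℤ) (a b : M), a ∈ 𝒜 i → b ∈ 𝒜 j → i + j = d → P (a ⊗ₜ[R] b)) : P c := by
  have hc' : c ∈ ⨆ i : ℤ, tpiece 𝒜 i (d - i) := hc
  refine Submodule.iSup_induction (motive := P) _ hc' (fun i x hx => ?_) h0 hadd
  obtain ⟨t, rfl⟩ := hx
  induction t with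
  | zero => simpa using h0
  | tmul a b => exact (by simpa using htmul i (d - i) a.1 b.1 a.2 b.2 (by ring))
  | add u v hu hv => simpa using hadd _ _ hu hv

end Aux


section Aux2
variable {R : Type} [CommRing R] {M : Type} [AddCommGroup M] [Module R M]

lemma zsmul_tmul' {N P : Type} [AddCommGroup N] [Module R N] [AddCommGroup P] [Module R P]
    (z : ℤ) (a : N) (b : P) : (z • a) ⊗ₜ[R] b = z • (a ⊗ₜ[R] b) :=
  map_zsmul ((TensorProduct.mk R N P).flip b) z a

lemma tmul_zsmul' {N P : Type} [AddCommGroup N] [Module R N] [AddCommGroup P] [Module R P]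
    (z : ℤ) (a : N) (b : P) : a ⊗ₜ[R] (z • b) = z • (a ⊗ₜ[R] b) :=
  map_zsmul ((TensorProduct.mk R N P) a) z b

end Aux2

/-- In a unital coFrobenius bialgebra `(A, μ, λ, η)` (graded-associative `μ`
with unit `η`, copairing `c = (-1)^{|λ||μ|+|μ|}λη`, coFrobenius relations
`λ = (1⊗μ)(c⊗1) = (-1)^{|μ|}(μ⊗1)(1⊗c)` and symmetry `τc = (-1)^{|λ|}c`),
the coproduct `λ` is graded-coassociative: `(λ⊗1)λ = (-1)^{|λ|}(1⊗λ)λ`. -/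
theorem unital_coFrobenius_coassoc {R : Type} [CommRing R] {M : Type} [AddCommGroup M]
    [Module R M] [Module.Free R M] [Module.Finite R M]
    (𝒜 : ℤ → Submodule R M) [DirectSum.Decomposition 𝒜]
    (U : UnitalCoFrob R 𝒜) :
    (LinearMap.rTensor M U.lam).comp U.lam =
      ksign U.dl • ((TensorProduct.assoc R M M M).symm.toLinearMap.comp
        ((TensorProduct.map (signAction 𝒜 U.dl) U.lam).comp U.lam)) := by
  classical
  obtain ⟨μ, lm, η, dm, dl, hmuh, hlamh, hηh, hassoc, hul, hur, c, hcdef, hCL, hCR, hsym⟩ := U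
  dsimp only
  have hcmem : c ∈ tgrade 𝒜 (dl - dm) := by
    rw [hcdef]
    have h1 : lm η ∈ tgrade 𝒜 (-dm + dl) := hlamh _ _ hηh
    have h2 : (-dm + dl) = dl - dm := by ring
    rw [h2] at h1
    exact zsmul_mem h1 _
  have L1 : ∀ y : M, lm y = TensorProduct.map (signAction 𝒜 dm) μ
      ((TensorProduct.assoc R M M M) (c ⊗ₜ[R] y)) := by
    intro y
    have h := LinearMap.congr_fun hCL y
    simpa using h
  have L2 : ∀ (k : ℤ) (y : M), y ∈ 𝒜 k → lm y = ksign (dm + (dl - dm) * k) •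
      (LinearMap.rTensor M μ) ((TensorProduct.assoc R M M M).symm (y ⊗ₜ[R] c)) := by
    intro k y hy
    have h := LinearMap.congr_fun hCR y
    simp only [LinearMap.smul_apply, LinearMap.comp_apply, LinearEquiv.coe_coe,
      LinearMap.flip_apply, TensorProduct.mk_apply] at h
    rw [signAction_of_mem 𝒜 hy, zsmul_tmul', map_zsmul, map_zsmul, smul_smul,
      ← ksign_add] at h
    exact h
  apply LinearMap.ext
  intro x
  simp only [LinearMap.comp_apply, LinearMap.smul_apply, LinearEquiv.coe_coe]
  induction x using DirectSum.Decomposition.inductionOn 𝒜 with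
  | zero => simp
  | add u v hu hv => simp only [map_add, smul_add, hu, hv]
  | homogeneous m =>
    rename_i k
    erw [LinearMap.smul_apply]
    simp only [LinearMap.comp_apply, LinearEquiv.coe_coe]
    conv_lhs => rw [L2 k _ m.2]
    conv_rhs => rw [L1 (↑m : M)]
    rw [map_zsmul, ← LinearMap.comp_apply (LinearMap.rTensor M lm), ← LinearMap.rTensor_comp]
    conv_lhs => rw [hCL]
    have key : ∀ c' ∈ tgrade 𝒜 (dl - dm),
        ksign dl • (TensorProduct.assoc R M M M).symm
          ((TensorProduct.map (signAction 𝒜 dl) lm)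
            ((TensorProduct.map (signAction 𝒜 dm) μ)
              ((TensorProduct.assoc R M M M) (c' ⊗ₜ[R] (↑m : M)))))
        = ksign (dm + (dl - dm) * k) •
          (LinearMap.rTensor M
            ((TensorProduct.map (signAction 𝒜 dm) μ ∘ₗ
                (TensorProduct.assoc R M M M).toLinearMap ∘ₗ
                  (TensorProduct.mk R (M ⊗[R] M) M c')) ∘ₗ μ))
          ((TensorProduct.assoc R M M M).symm ((↑m : M) ⊗ₜ[R] c)) := by
      intro c' hc'
      refine tgrade_induction 𝒜 hc' (P := fun cc =>
          ksign dl • (TensorProduct.assoc R M M M).symm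
            ((TensorProduct.map (signAction 𝒜 dl) lm)
              ((TensorProduct.map (signAction 𝒜 dm) μ)
                ((TensorProduct.assoc R M M M) (cc ⊗ₜ[R] (↑m : M)))))
          = ksign (dm + (dl - dm) * k) •
            (LinearMap.rTensor M
              ((TensorProduct.map (signAction 𝒜 dm) μ ∘ₗ
                  (TensorProduct.assoc R M M M).toLinearMap ∘ₗ
                    (TensorProduct.mk R (M ⊗[R] M) M cc)) ∘ₗ μ))
            ((TensorProduct.assoc R M M M).symm ((↑m : M) ⊗ₜ[R] c))) ?_ ?_ ?_
      · simp [zsmul_zero]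
      · intro u v hu hv
        simp only [TensorProduct.add_tmul, map_add, smul_add, LinearMap.comp_add,
          LinearMap.add_comp, LinearMap.rTensor_add, LinearMap.add_apply, zsmul_add, hu, hv]
      · intro i' j' a' b' ha' hb' hij'
        have hbm : μ (b' ⊗ₜ[R] (↑m : M)) ∈ 𝒜 (j' + k + dm) := hmuh j' k b' hb' (↑m) m.2
        simp only [TensorProduct.assoc_tmul, TensorProduct.map_tmul,
          signAction_of_mem 𝒜 ha', zsmul_tmul', tmul_zsmul', map_zsmul, smul_smul,
          ← ksign_add]
        rw [L2 _ _ hbm]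
        simp only [tmul_zsmul', map_zsmul, smul_smul, ← ksign_add]
        refine tgrade_induction 𝒜 hcmem (P := fun cc =>
          ksign (dl + (dm * i' + dl * i') + (dm + (dl - dm) * (j' + k + dm))) •
            (TensorProduct.assoc R M M M).symm
              (a' ⊗ₜ[R] (LinearMap.rTensor M μ)
                ((TensorProduct.assoc R M M M).symm (μ (b' ⊗ₜ[R] (↑m : M)) ⊗ₜ[R] cc))) =
          ksign (dm + (dl - dm) * k) •
            (LinearMap.rTensor M
              ((TensorProduct.map (signAction 𝒜 dm) μ ∘ₗ
                  (TensorProduct.assoc R M M M).toLinearMap ∘ₗ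
                    (TensorProduct.mk R (M ⊗[R] M) M) (a' ⊗ₜ[R] b')) ∘ₗ μ))
            ((TensorProduct.assoc R M M M).symm ((↑m : M) ⊗ₜ[R] cc))) ?_ ?_ ?_
        · simp [zsmul_zero]
        · intro u v hu hv
          simp only [TensorProduct.tmul_add, map_add, smul_add, zsmul_add, hu, hv]
        · intro i j a b ha hb hij
          have hass := LinearMap.congr_fun hassoc ((b' ⊗ₜ[R] (↑m : M)) ⊗ₜ[R] a)
          simp only [LinearMap.comp_apply, LinearMap.smul_apply, LinearEquiv.coe_coe,
            LinearMap.rTensor_tmul, TensorProduct.assoc_tmul, TensorProduct.map_tmul,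
            signAction_of_mem 𝒜 hb', zsmul_tmul', map_zsmul, smul_smul,
            ← ksign_add] at hass
          simp only [TensorProduct.assoc_symm_tmul, LinearMap.rTensor_tmul,
            LinearMap.comp_apply, TensorProduct.mk_apply, TensorProduct.assoc_tmul,
            TensorProduct.map_tmul, signAction_of_mem 𝒜 ha', zsmul_tmul', tmul_zsmul',
            map_zsmul, smul_smul, ← ksign_add, LinearEquiv.coe_coe, hass]
          congr 1
          apply ksign_congr
          have he : (dl + (dm * i' + dl * i') + (dm + (dl - dm) * (j' + k + dm)) +
                (dm + dm * j')) - (dm + (dl - dm) * k + dm * i') =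
              dl * (dl + 1) + (-((dm - 1) * ((dm - 1) + 1))) := by
            linear_combination (dl : ℤ) * hij'
          rw [he]
          exact (Int.even_mul_succ_self dl).add (Int.even_mul_succ_self (dm - 1)).neg
    exact (key c hcmem).symm

end GradedCoFrob
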